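/- If there exist a symmetric multi-additive function D : X⁴ → Y and a symmetric bi-additive function B : X² → Y such that f(x) = D(x,x,x,x) + B(x,x) for all x ∈ X, then f satisfies the functional equation f(nx+y) + f(nx−y) = n²f(x+y) + n²f(x−y) + 2f(nx) − 2n²f(x) − 2(n²−1)f(y) for all x, y ∈ X. -/

import Mathlib

theorem stmt_8 {X Y : Type*} [AddCommGroup X] [Module ℝ X] [AddCommGroup Y] [Module ℝ Y]
    (n : ℤ) (hn0 : n ≠ 0) (hn1 : n ≠ 1) (hn2 : n ≠ -1) (f : X → Y)
    (D : X → X → X → X → Y)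
    (Dadd : ∀ a a' b c d : X, D (a + a') b c d = D a b c d + D a' b c d)
    (Dsym12 : ∀ a b c d : X, D a b c d = D b a c d)
    (Dsym23 : ∀ a b c d : X, D a b c d = D a c b d)
    (Dsym34 : ∀ a b c d : X, D a b c d = D a b d c)
    (B : X → X → Y)
    (Badd : ∀ a a' b : X, B (a + a') b = B a b + B a' b)
    (Bsym : ∀ a b : X, B a b = B b a)
    (hfDB : ∀ x : X, f x = D x x x x + B x x) :
    ∀ x y : X, f (n • x + y) + f (n • x - y) =
      (n ^ 2) • f (x + y) + (n ^ 2) • f (x - y) + (2 : ℤ) • f (n • x)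
        - (2 * n ^ 2) • f x - (2 * (n ^ 2 - 1)) • f y := by
  have Dadd2 : ∀ a b b' c d : X, D a (b + b') c d = D a b c d + D a b' c d := by
    intro a b b' c d
    rw [Dsym12 a (b + b'), Dadd, ← Dsym12 a b, ← Dsym12 a b']
  have Dadd3 : ∀ a b c c' d : X, D a b (c + c') d = D a b c d + D a b c' d := by
    intro a b c c' d
    rw [Dsym23 a b (c + c'), Dadd2, ← Dsym23 a b c, ← Dsym23 a b c']
  have Dadd4 : ∀ a b c d d' : X, D a b c (d + d') = D a b c d + D a b c d' := by
    intro a b c d d'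
    rw [Dsym34 a b c (d + d'), Dadd3, ← Dsym34 a b c d, ← Dsym34 a b c d']
  have Dz1 : ∀ (m : ℤ) (a b c d : X), D (m • a) b c d = m • D a b c d := by
    intro m a b c d
    exact (AddMonoidHom.mk' (fun a => D a b c d) (fun u v => Dadd u v b c d)).map_zsmul m a
  have Dz2 : ∀ (m : ℤ) (a b c d : X), D a (m • b) c d = m • D a b c d := by
    intro m a b c d
    exact (AddMonoidHom.mk' (fun b => D a b c d) (fun u v => Dadd2 a u v c d)).map_zsmul m b
  have Dz3 : ∀ (m : ℤ) (a b c d : X), D a b (m • c) d = m • D a b c d := by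
    intro m a b c d
    exact (AddMonoidHom.mk' (fun c => D a b c d) (fun u v => Dadd3 a b u v d)).map_zsmul m c
  have Dz4 : ∀ (m : ℤ) (a b c d : X), D a b c (m • d) = m • D a b c d := by
    intro m a b c d
    exact (AddMonoidHom.mk' (fun d => D a b c d) (fun u v => Dadd4 a b c u v)).map_zsmul m d
  have Badd2 : ∀ a b b' : X, B a (b + b') = B a b + B a b' := by
    intro a b b'
    rw [Bsym a (b + b'), Badd, Bsym b a, Bsym b' a]
  have Bz1 : ∀ (m : ℤ) (a b : X), B (m • a) b = m • B a b := by
    intro m a b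
    exact (AddMonoidHom.mk' (fun a => B a b) (fun u v => Badd u v b)).map_zsmul m a
  have Bz2 : ∀ (m : ℤ) (a b : X), B a (m • b) = m • B a b := by
    intro m a b
    exact (AddMonoidHom.mk' (fun b => B a b) (fun u v => Badd2 a u v)).map_zsmul m b
  -- permutation normalizers
  have s1 : ∀ u v : X, D v u u u = D u u u v := by
    intro u v; rw [Dsym12 v u, Dsym23 u v, Dsym34 u u v u]
  have s2 : ∀ u v : X, D u v u u = D u u u v := by
    intro u v; rw [Dsym23 u v, Dsym34 u u v u]
  have s3 : ∀ u v : X, D u u v u = D u u u v := fun u v => Dsym34 u u v u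
  have t1 : ∀ u v : X, D v v u u = D u u v v := by
    intro u v; rw [Dsym23 v v u u, Dsym12 v u, Dsym34 u v v u, Dsym23 u v u v]
  have t2 : ∀ u v : X, D v u v u = D u u v v := by
    intro u v; rw [Dsym12 v u, Dsym34 u v v u, Dsym23 u v u v]
  have t3 : ∀ u v : X, D v u u v = D u u v v := by
    intro u v; rw [Dsym12 v u, Dsym23 u v u v]
  have t4 : ∀ u v : X, D u v v u = D u u v v := by
    intro u v; rw [Dsym34 u v v u, Dsym23 u v u v]
  have t5 : ∀ u v : X, D u v u v = D u u v v := fun u v => Dsym23 u v u v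
  have w1 : ∀ u v : X, D v v v u = D u v v v := by
    intro u v; rw [Dsym34 v v v u, Dsym23 v v u v, Dsym12 v u]
  have w2 : ∀ u v : X, D v v u v = D u v v v := by
    intro u v; rw [Dsym23 v v u v, Dsym12 v u]
  have w3 : ∀ u v : X, D v u v v = D u v v v := fun u v => Dsym12 v u v v
  intro x y
  have hy : (-y : X) = (-1 : ℤ) • y := (neg_one_zsmul y).symm
  simp only [hfDB, sub_eq_add_neg, hy]
  simp only [Dadd, Dadd2, Dadd3, Dadd4, Badd, Badd2]
  simp only [Dz1, Dz2, Dz3, Dz4, Bz1, Bz2]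
  simp only [s1 x y, s2 x y, s3 x y, t1 x y, t2 x y, t3 x y, t4 x y, t5 x y,
    w1 x y, w2 x y, w3 x y, Bsym y x]
  module
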